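/- Let p be a prime, X a finite connected undirected graph, and α: E(X̃) → Z_p a voltage assignment. For each n ≥ 0, let α_n be the composition of α with the projection Z_p → Z/p^nZ and let X_n = X(Z/p^nZ, α_n). Then, for each fixed n ≥ 0, there exists a voltage assignment β: E(X̃_n) → p^nZ_p such that for every integer m ≥ n, X_m is isomorphic to the derived graph X_n(Z/p^{m−n}Z, β_m), where β_m is the composition of β with the projection p^nZ_p → p^nZ_p/p^mZ_p ≅ Z/p^{m−n}Z. -/

import Mathlib

/-! # Multigraphs, coverings, voltage assignments

Directed multigraphs (with loops and multiple edges allowed), undirected multigraphs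
(encoded à la Serre, as directed graphs with an edge-inversion), morphisms, coverings,
sheet numbers, deck transformation groups, Galois coverings, voltage assignments and
their derived graphs, connectedness, connected components, directed cycle graphs,
abstract (tectonic) craters and (tectonic) `l`-volcanoes. -/

/-- A directed multigraph. -/
structure Digraph' : Type 1 where
  V : Type
  E : Type
  src : E → V
  tgt : E → V

namespace Digraph'

variable (X : Digraph')

/-- Two vertices are adjacent if some edge goes from the first to the second. -/
def Adj (v w : X.V) : Prop := ∃ e : X.E, X.src e = v ∧ X.tgt e = w

/-- Two vertices lie in the same connected component (of the underlying
undirected graph). -/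
def Reach (v w : X.V) : Prop := Relation.EqvGen X.Adj v w

/-- A graph is connected if any two vertices lie in the same connected component. -/
def Connected : Prop := ∀ v w : X.V, X.Reach v w

/-- The set of vertices of the connected component containing `v`. -/
def ComponentSet (v : X.V) : Set X.V := {w | X.Reach v w}

/-- The number of connected components. -/
noncomputable def NumComponents : ℕ := Nat.card (Quot X.Adj)

/-- The subgraph generated by a set `S` of vertices: its edges are the edges of `X`
having both endpoints in `S`. -/
def induced (S : Set X.V) : Digraph' where
  V := S
  E := {e : X.E // X.src e ∈ S ∧ X.tgt e ∈ S}
  src e := ⟨X.src e.1, e.2.1⟩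
  tgt e := ⟨X.tgt e.1, e.2.2⟩

end Digraph'

/-- A morphism of directed multigraphs. -/
structure DigraphHom (Y X : Digraph') where
  onV : Y.V → X.V
  onE : Y.E → X.E
  map_src : ∀ e, X.src (onE e) = onV (Y.src e)
  map_tgt : ∀ e, X.tgt (onE e) = onV (Y.tgt e)

namespace DigraphHom

/-- The identity morphism. -/
def id (X : Digraph') : DigraphHom X X :=
  ⟨fun v => v, fun e => e, fun _ => rfl, fun _ => rfl⟩

/-- Composition of morphisms of directed multigraphs. -/
def comp {Z Y X : Digraph'} (g : DigraphHom Y X) (f : DigraphHom Z Y) :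
    DigraphHom Z X where
  onV := g.onV ∘ f.onV
  onE := g.onE ∘ f.onE
  map_src e := by simp only [Function.comp_apply, g.map_src, f.map_src]
  map_tgt e := by simp only [Function.comp_apply, g.map_tgt, f.map_tgt]

end DigraphHom

/-- A covering of directed multigraphs: a surjective morphism which is a local
bijection (it restricts to a bijection on the edges emanating from, respectively
arriving at, each given vertex). -/
def IsGraphCovering {Y X : Digraph'} (f : DigraphHom Y X) : Prop :=
  Function.Surjective f.onV ∧
    (∀ v : Y.V, Set.BijOn f.onE {e | Y.src e = v} {e | X.src e = f.onV v}) ∧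
    (∀ v : Y.V, Set.BijOn f.onE {e | Y.tgt e = v} {e | X.tgt e = f.onV v})

/-- A morphism of graphs is `d`-sheeted if every vertex downstairs has exactly `d`
preimages. -/
def IsSheeted {Y X : Digraph'} (f : DigraphHom Y X) (d : ℕ) : Prop :=
  ∀ x : X.V, Nat.card {y : Y.V // f.onV y = x} = d

/-- The group of deck transformations of `f : Y → X`: pairs of permutations of the
vertices and of the edges of `Y` which are compatible with the graph structure and
commute with `f`. -/
def DeckGroup {Y X : Digraph'} (f : DigraphHom Y X) :
    Subgroup (Equiv.Perm Y.V × Equiv.Perm Y.E) where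
  carrier := {σ | (∀ e, Y.src (σ.2 e) = σ.1 (Y.src e)) ∧
    (∀ e, Y.tgt (σ.2 e) = σ.1 (Y.tgt e)) ∧
    (∀ v, f.onV (σ.1 v) = f.onV v) ∧ (∀ e, f.onE (σ.2 e) = f.onE e)}
  one_mem' := ⟨fun _ => rfl, fun _ => rfl, fun _ => rfl, fun _ => rfl⟩
  mul_mem' := by
    rintro σ τ ⟨h1, h2, h3, h4⟩ ⟨g1, g2, g3, g4⟩
    exact ⟨fun e => by simp [Equiv.Perm.mul_apply, h1, g1],
      fun e => by simp [Equiv.Perm.mul_apply, h2, g2],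
      fun v => by simp [Equiv.Perm.mul_apply, h3, g3],
      fun e => by simp [Equiv.Perm.mul_apply, h4, g4]⟩
  inv_mem' := by
    rintro σ ⟨h1, h2, h3, h4⟩
    refine ⟨fun e => ?_, fun e => ?_, fun v => ?_, fun e => ?_⟩
    · have := h1 (σ.2⁻¹ e)
      simp only [Equiv.Perm.coe_inv, Equiv.apply_symm_apply] at this
      simp [Prod.fst_inv, Prod.snd_inv, this]
    · have := h2 (σ.2⁻¹ e)
      simp only [Equiv.Perm.coe_inv, Equiv.apply_symm_apply] at this
      simp [Prod.fst_inv, Prod.snd_inv, this]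
    · have := h3 (σ.1⁻¹ v)
      simp only [Equiv.Perm.coe_inv, Equiv.apply_symm_apply] at this
      simp [Prod.fst_inv, this]
    · have := h4 (σ.2⁻¹ e)
      simp only [Equiv.Perm.coe_inv, Equiv.apply_symm_apply] at this
      simp [Prod.snd_inv, this]

/-- A covering is Galois if it is `d`-sheeted where `d` is the number of its deck
transformations. -/
def IsGaloisCov {Y X : Digraph'} (f : DigraphHom Y X) : Prop :=
  IsGraphCovering f ∧ ∃ d : ℕ, IsSheeted f d ∧ Nat.card ↥(DeckGroup f) = d

/-- An isomorphism of directed multigraphs. -/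
structure DigraphIso (Y X : Digraph') where
  onV : Y.V ≃ X.V
  onE : Y.E ≃ X.E
  map_src : ∀ e, X.src (onE e) = onV (Y.src e)
  map_tgt : ∀ e, X.tgt (onE e) = onV (Y.tgt e)

/-- An undirected multigraph, encoded à la Serre: every undirected edge is recorded
as a pair of mutually inverse directed edges. -/
structure SerreGraph : Type 1 extends Digraph' where
  inv : E → E
  inv_inv : ∀ e, inv (inv e) = e
  src_inv : ∀ e, src (inv e) = tgt e
  tgt_inv : ∀ e, tgt (inv e) = src e

namespace SerreGraph

variable (X : SerreGraph)

/-- The subgraph of an undirected multigraph generated by a set `S` of vertices. -/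
def inducedClosed (S : Set X.V) : SerreGraph where
  V := S
  E := {e : X.E // X.src e ∈ S ∧ X.tgt e ∈ S}
  src e := ⟨X.src e.1, e.2.1⟩
  tgt e := ⟨X.tgt e.1, e.2.2⟩
  inv e := ⟨X.inv e.1, by rw [X.src_inv, X.tgt_inv]; exact ⟨e.2.2, e.2.1⟩⟩
  inv_inv e := Subtype.ext (X.inv_inv e.1)
  src_inv e := Subtype.ext (X.src_inv e.1)
  tgt_inv e := Subtype.ext (X.tgt_inv e.1)

/-- The connected component of a vertex, as an undirected multigraph. -/
def component (v : X.V) : SerreGraph :=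
  X.inducedClosed (X.toDigraph'.ComponentSet v)

end SerreGraph

/-- The undirected multigraph underlying a directed multigraph (the image of the
directed graph under the forgetful map). -/
def Digraph'.toSerre (X : Digraph') : SerreGraph where
  V := X.V
  E := X.E × Bool
  src e := if e.2 then X.src e.1 else X.tgt e.1
  tgt e := if e.2 then X.tgt e.1 else X.src e.1
  inv e := (e.1, !e.2)
  inv_inv e := by cases e with
    | mk a b => cases b <;> rfl
  src_inv e := by cases e with
    | mk a b => cases b <;> rfl
  tgt_inv e := by cases e with
    | mk a b => cases b <;> rfl

/-- A morphism of undirected multigraphs. -/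
structure SerreHom (Y X : SerreGraph) where
  onV : Y.V → X.V
  onE : Y.E → X.E
  map_src : ∀ e, X.src (onE e) = onV (Y.src e)
  map_tgt : ∀ e, X.tgt (onE e) = onV (Y.tgt e)
  map_inv : ∀ e, X.inv (onE e) = onE (Y.inv e)

/-- The underlying morphism of directed multigraphs. -/
def SerreHom.toDigraphHom {Y X : SerreGraph} (f : SerreHom Y X) :
    DigraphHom Y.toDigraph' X.toDigraph' :=
  ⟨f.onV, f.onE, f.map_src, f.map_tgt⟩

/-- An isomorphism of undirected multigraphs. -/
structure SerreIso (Y X : SerreGraph) where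
  onV : Y.V ≃ X.V
  onE : Y.E ≃ X.E
  map_src : ∀ e, X.src (onE e) = onV (Y.src e)
  map_tgt : ∀ e, X.tgt (onE e) = onV (Y.tgt e)
  map_inv : ∀ e, X.inv (onE e) = onE (Y.inv e)

/-- The group of deck transformations of a morphism of undirected multigraphs. -/
def SerreDeckGroup {Y X : SerreGraph} (f : SerreHom Y X) :
    Subgroup (Equiv.Perm Y.V × Equiv.Perm Y.E) where
  carrier := {σ | (∀ e, Y.src (σ.2 e) = σ.1 (Y.src e)) ∧
    (∀ e, Y.tgt (σ.2 e) = σ.1 (Y.tgt e)) ∧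
    (∀ e, Y.inv (σ.2 e) = σ.2 (Y.inv e)) ∧
    (∀ v, f.onV (σ.1 v) = f.onV v) ∧ (∀ e, f.onE (σ.2 e) = f.onE e)}
  one_mem' := ⟨fun _ => rfl, fun _ => rfl, fun _ => rfl, fun _ => rfl, fun _ => rfl⟩
  mul_mem' := by
    rintro σ τ ⟨h1, h2, h3, h4, h5⟩ ⟨g1, g2, g3, g4, g5⟩
    exact ⟨fun e => by simp [Equiv.Perm.mul_apply, h1, g1],
      fun e => by simp [Equiv.Perm.mul_apply, h2, g2],
      fun e => by simp [Equiv.Perm.mul_apply, h3, g3],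
      fun v => by simp [Equiv.Perm.mul_apply, h4, g4],
      fun e => by simp [Equiv.Perm.mul_apply, h5, g5]⟩
  inv_mem' := by
    rintro σ ⟨h1, h2, h3, h4, h5⟩
    refine ⟨fun e => ?_, fun e => ?_, fun e => ?_, fun v => ?_, fun e => ?_⟩
    · have := h1 (σ.2⁻¹ e)
      simp only [Equiv.Perm.coe_inv, Equiv.apply_symm_apply] at this
      simp [Prod.fst_inv, Prod.snd_inv, this]
    · have := h2 (σ.2⁻¹ e)
      simp only [Equiv.Perm.coe_inv, Equiv.apply_symm_apply] at this
      simp [Prod.fst_inv, Prod.snd_inv, this]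
    · have := h3 (σ.2⁻¹ e)
      simp only [Equiv.Perm.coe_inv, Equiv.apply_symm_apply] at this
      simp only [Prod.snd_inv]
      rw [this]
      simp
    · have := h4 (σ.1⁻¹ v)
      simp only [Equiv.Perm.coe_inv, Equiv.apply_symm_apply] at this
      simp [Prod.fst_inv, this]
    · have := h5 (σ.2⁻¹ e)
      simp only [Equiv.Perm.coe_inv, Equiv.apply_symm_apply] at this
      simp [Prod.snd_inv, this]

/-- A morphism of undirected multigraphs is a Galois covering if it is a covering
which is `d`-sheeted, where `d` is the number of its deck transformations. -/
def IsGaloisSerreCov {Y X : SerreGraph} (f : SerreHom Y X) : Prop :=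
  IsGraphCovering f.toDigraphHom ∧
    ∃ d : ℕ, IsSheeted f.toDigraphHom d ∧ Nat.card ↥(SerreDeckGroup f) = d
/-- A voltage assignment on an undirected multigraph, with values in a
(multiplicative) group `G`. -/
structure Voltage (X : SerreGraph) (G : Type) [Group G] where
  fn : X.E → G
  compat : ∀ e, fn (X.inv e) = (fn e)⁻¹

/-- The derived graph of a (multiplicative) voltage assignment. -/
def SerreGraph.derived (X : SerreGraph) (G : Type) [Group G] (α : Voltage X G) :
    SerreGraph where
  V := X.V × G
  E := X.E × G
  src e := (X.src e.1, e.2)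
  tgt e := (X.tgt e.1, e.2 * α.fn e.1)
  inv e := (X.inv e.1, e.2 * α.fn e.1)
  inv_inv e := by
    obtain ⟨a, g⟩ := e
    simp [α.compat, X.inv_inv, mul_assoc]
  src_inv e := by
    obtain ⟨a, g⟩ := e
    simp [X.src_inv]
  tgt_inv e := by
    obtain ⟨a, g⟩ := e
    simp [X.tgt_inv, α.compat, mul_assoc]

/-- A voltage assignment on an undirected multigraph, with values in an additive
group `G`. -/
structure AddVoltage (X : SerreGraph) (G : Type) [AddGroup G] where
  fn : X.E → G
  compat : ∀ e, fn (X.inv e) = -(fn e)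

/-- Post-composition of an additive voltage assignment with a map of additive
groups preserving negation. -/
def AddVoltage.comp {X : SerreGraph} {G H : Type} [AddGroup G] [AddGroup H]
    (α : AddVoltage X G) (f : G → H) (hf : ∀ x, f (-x) = -(f x)) : AddVoltage X H :=
  ⟨fun e => f (α.fn e), fun e => by rw [α.compat, hf]⟩

/-- The derived graph of an additive voltage assignment. -/
def SerreGraph.derivedAdd (X : SerreGraph) (G : Type) [AddGroup G]
    (α : AddVoltage X G) : SerreGraph where
  V := X.V × G
  E := X.E × G
  src e := (X.src e.1, e.2)
  tgt e := (X.tgt e.1, e.2 + α.fn e.1)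
  inv e := (X.inv e.1, e.2 + α.fn e.1)
  inv_inv e := by
    obtain ⟨a, g⟩ := e
    simp [α.compat, X.inv_inv, add_assoc]
  src_inv e := by
    obtain ⟨a, g⟩ := e
    simp [X.src_inv]
  tgt_inv e := by
    obtain ⟨a, g⟩ := e
    simp [X.tgt_inv, α.compat, add_assoc]

/-- The derived graph `X_n = X(ℤ/pⁿℤ, αₙ)` of the reduction `αₙ` modulo `pⁿ` of a
`ℤₚ`-valued voltage assignment `α`. -/
noncomputable def Xlevel (p : ℕ) [Fact p.Prime] (X : SerreGraph) (α : AddVoltage X ℤ_[p])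
    (n : ℕ) : SerreGraph :=
  X.derivedAdd (ZMod (p ^ n))
    (α.comp (PadicInt.toZModPow n) (fun x => by simp [map_neg]))

/-- **Lemma (shifting the base of a `ℤₚ`-tower of derived graphs).**
Let `p` be a prime, `X` a finite connected undirected graph, and `α : E(X) → ℤₚ` a
voltage assignment.  For each `n ≥ 0` let `αₙ` be the composition of `α` with the
projection `ℤₚ → ℤ/pⁿℤ` and let `Xₙ = X(ℤ/pⁿℤ, αₙ)`.  Then for each fixed `n` there
is a voltage assignment `β : E(Xₙ) → pⁿℤₚ` (here `β = pⁿ • γ`, which guarantees that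
it takes values in `pⁿℤₚ`) such that for every `m ≥ n`, the graph `Xₘ` is isomorphic
to the derived graph `Xₙ(ℤ/p^{m-n}ℤ, βₘ)`, where `βₘ` is the composition of `β` with
the projection `pⁿℤₚ → pⁿℤₚ/pᵐℤₚ ≅ ℤ/p^{m-n}ℤ` (concretely, `βₘ = γ mod p^{m-n}`). -/
theorem shift_base_of_Zp_tower_of_derived_graphs
    (p : ℕ) [Fact p.Prime] (X : SerreGraph) (hV : Finite X.V) (hE : Finite X.E)
    (hconn : X.toDigraph'.Connected) (α : AddVoltage X ℤ_[p]) (n : ℕ) :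
    ∃ β γ : AddVoltage (Xlevel p X α n) ℤ_[p],
      (∀ e, β.fn e = (p : ℤ_[p]) ^ n * γ.fn e) ∧
      ∀ m : ℕ, n ≤ m →
        Nonempty (SerreIso (Xlevel p X α m)
          ((Xlevel p X α n).derivedAdd (ZMod (p ^ (m - n)))
            (γ.comp (PadicInt.toZModPow (m - n)) (fun x => by simp [map_neg])))) := by
  classical
  have hp : p.Prime := Fact.out
  have hpzp : (p : ℤ_[p]) ≠ 0 := Nat.cast_ne_zero.mpr hp.ne_zero
  have hpn : (p : ℤ_[p]) ^ n ≠ 0 := pow_ne_zero _ hpzp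
  haveI hNZ : ∀ l : ℕ, NeZero (p ^ l) := fun l => ⟨(pow_pos hp.pos l).ne'⟩
  have hker : ∀ (l : ℕ) (x : ℤ_[p]),
      PadicInt.toZModPow l x = 0 ↔ (p : ℤ_[p]) ^ l ∣ x := by
    intro l x
    rw [← RingHom.mem_ker, PadicInt.ker_toZModPow, Ideal.mem_span_singleton]
  set sl : ∀ l : ℕ, ZMod (p ^ l) → ℤ_[p] := fun l σ => (σ.val : ℤ_[p]) with hsl
  have L1 : ∀ (l : ℕ) (σ : ZMod (p ^ l)), PadicInt.toZModPow l (sl l σ) = σ := by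
    intro l σ
    simp only [hsl, map_natCast]
    exact ZMod.natCast_rightInverse σ
  set βf : X.E × ZMod (p ^ n) → ℤ_[p] :=
    fun ε => sl n ε.2 + α.fn ε.1 - sl n (ε.2 + PadicInt.toZModPow n (α.fn ε.1)) with hβf
  have hβ0 : ∀ ε, PadicInt.toZModPow n (βf ε) = 0 := by
    intro ε
    simp [hβf, map_sub, map_add, L1 n]
  have hdvd : ∀ ε, (p : ℤ_[p]) ^ n ∣ βf ε := fun ε => (hker n _).mp (hβ0 ε)
  set γf : X.E × ZMod (p ^ n) → ℤ_[p] := fun ε => (hdvd ε).choose with hγf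
  have hγspec : ∀ ε, βf ε = (p : ℤ_[p]) ^ n * γf ε := fun ε => (hdvd ε).choose_spec
  have hβcompat : ∀ ε : (Xlevel p X α n).E,
      βf ((Xlevel p X α n).inv ε) = - βf ε := by
    rintro ⟨e, σ⟩
    show βf (X.inv e, σ + PadicInt.toZModPow n (α.fn e)) = - βf (e, σ)
    simp only [hβf]
    rw [show α.fn (X.inv e) = -(α.fn e) from α.compat e, map_neg, add_neg_cancel_right]
    ring
  have hγcompat : ∀ ε : (Xlevel p X α n).E,
      γf ((Xlevel p X α n).inv ε) = - γf ε := by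
    intro ε
    apply mul_left_cancel₀ hpn
    rw [← hγspec ((Xlevel p X α n).inv ε : X.E × ZMod (p ^ n)), hβcompat ε, hγspec ε]
    ring
  refine ⟨⟨βf, hβcompat⟩, ⟨γf, hγcompat⟩, fun e => hγspec e, ?_⟩
  intro m hmn
  have hDdvd : ∀ x : ℤ_[p],
      (p : ℤ_[p]) ^ n ∣ (x - sl n (PadicInt.toZModPow n x)) := by
    intro x
    rw [← hker n]
    simp [map_sub, L1 n]
  set D : ℤ_[p] → ℤ_[p] := fun x => (hDdvd x).choose with hD
  have hDspec : ∀ x : ℤ_[p],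
      x - sl n (PadicInt.toZModPow n x) = (p : ℤ_[p]) ^ n * D x :=
    fun x => (hDdvd x).choose_spec
  have L4 : ∀ (x : ℤ_[p]) (e : X.E),
      D (x + α.fn e) = D x + γf (e, PadicInt.toZModPow n x) := by
    intro x e
    apply mul_left_cancel₀ hpn
    rw [mul_add, ← hDspec, ← hDspec, ← hγspec]
    simp only [hβf, map_add]
    ring
  have L6 : ∀ x y : ℤ_[p], PadicInt.toZModPow m x = PadicInt.toZModPow m y →
      PadicInt.toZModPow n x = PadicInt.toZModPow n y ∧
      PadicInt.toZModPow (m - n) (D x) = PadicInt.toZModPow (m - n) (D y) := by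
    intro x y h
    obtain ⟨c, hc⟩ : (p : ℤ_[p]) ^ m ∣ x - y :=
      (hker m _).mp (by rw [map_sub, h, sub_self])
    have h1 : PadicInt.toZModPow n x = PadicInt.toZModPow n y := by
      have hd : (p : ℤ_[p]) ^ n ∣ x - y := dvd_trans (pow_dvd_pow _ hmn) ⟨c, hc⟩
      have := (hker n _).mpr hd
      rwa [map_sub, sub_eq_zero] at this
    refine ⟨h1, ?_⟩
    have h2 : (p : ℤ_[p]) ^ n * (D x - D y) =
        (p : ℤ_[p]) ^ n * ((p : ℤ_[p]) ^ (m - n) * c) := by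
      rw [mul_sub, ← hDspec, ← hDspec, h1, ← mul_assoc, ← pow_add,
        Nat.add_sub_cancel' hmn, ← hc]
      ring
    have h3 : D x - D y = (p : ℤ_[p]) ^ (m - n) * c := mul_left_cancel₀ hpn h2
    have := (hker (m - n) _).mpr ⟨c, h3⟩
    rwa [map_sub, sub_eq_zero] at this
  set F : ZMod (p ^ m) → ZMod (p ^ n) × ZMod (p ^ (m - n)) :=
    fun τ => (PadicInt.toZModPow n (sl m τ),
      PadicInt.toZModPow (m - n) (D (sl m τ))) with hF
  have hFinj : Function.Injective F := by
    intro τ1 τ2 h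
    simp only [hF, Prod.mk.injEq] at h
    obtain ⟨h1, h2⟩ := h
    obtain ⟨c, hc⟩ : (p : ℤ_[p]) ^ (m - n) ∣ (D (sl m τ1) - D (sl m τ2)) :=
      (hker _ _).mp (by rw [map_sub, h2, sub_self])
    have hxy : sl m τ1 - sl m τ2 = (p : ℤ_[p]) ^ m * c := by
      have h4 : sl m τ1 - sl m τ2 =
          (p : ℤ_[p]) ^ n * (D (sl m τ1) - D (sl m τ2)) := by
        rw [mul_sub, ← hDspec, ← hDspec, h1]
        ring
      rw [h4, hc, ← mul_assoc, ← pow_add, Nat.add_sub_cancel' hmn]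
    have h5 : PadicInt.toZModPow m (sl m τ1) = PadicInt.toZModPow m (sl m τ2) := by
      have := (hker m _).mpr ⟨c, hxy⟩
      rwa [map_sub, sub_eq_zero] at this
    rwa [L1 m, L1 m] at h5
  have hFbij : Function.Bijective F := by
    rw [Fintype.bijective_iff_injective_and_card]
    refine ⟨hFinj, ?_⟩
    simp only [Fintype.card_prod, ZMod.card]
    rw [← pow_add, Nat.add_sub_cancel' hmn]
  have L7 : ∀ (τ : ZMod (p ^ m)) (e : X.E),
      F (τ + PadicInt.toZModPow m (α.fn e)) =
        ((F τ).1 + PadicInt.toZModPow n (α.fn e),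
         (F τ).2 + PadicInt.toZModPow (m - n) (γf (e, (F τ).1))) := by
    intro τ e
    have hx : PadicInt.toZModPow m (sl m (τ + PadicInt.toZModPow m (α.fn e))) =
        PadicInt.toZModPow m (sl m τ + α.fn e) := by
      rw [L1 m, map_add, L1 m]
    obtain ⟨h1, h2⟩ := L6 _ _ hx
    simp only [hF]
    refine Prod.ext ?_ ?_
    · rw [h1, map_add]
    · rw [h2, L4, map_add]
  let eF : ZMod (p ^ m) ≃ ZMod (p ^ n) × ZMod (p ^ (m - n)) :=
    Equiv.ofBijective F hFbij
  let ψV : (X.V × ZMod (p ^ m)) ≃ ((X.V × ZMod (p ^ n)) × ZMod (p ^ (m - n))) :=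
    ((Equiv.refl X.V).prodCongr eF).trans (Equiv.prodAssoc _ _ _).symm
  let ψE : (X.E × ZMod (p ^ m)) ≃ ((X.E × ZMod (p ^ n)) × ZMod (p ^ (m - n))) :=
    ((Equiv.refl X.E).prodCongr eF).trans (Equiv.prodAssoc _ _ _).symm
  refine ⟨⟨ψV, ψE, ?_, ?_, ?_⟩⟩
  · intro ε
    rfl
  · rintro ⟨e, τ⟩
    show ((X.tgt e, (F τ).1 + PadicInt.toZModPow n (α.fn e)),
          (F τ).2 + PadicInt.toZModPow (m - n) (γf (e, (F τ).1))) =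
        ((X.tgt e, (F (τ + PadicInt.toZModPow m (α.fn e))).1),
          (F (τ + PadicInt.toZModPow m (α.fn e))).2)
    rw [L7 τ e]
  · rintro ⟨e, τ⟩
    show ((X.inv e, (F τ).1 + PadicInt.toZModPow n (α.fn e)),
          (F τ).2 + PadicInt.toZModPow (m - n) (γf (e, (F τ).1))) =
        ((X.inv e, (F (τ + PadicInt.toZModPow m (α.fn e))).1),
          (F (τ + PadicInt.toZModPow m (α.fn e))).2)
    rw [L7 τ e]
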